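/- Let Ω be a convex set in a locally convex topological vector space X, and let x̄ ∈ Ω. Then the sets Ω and {x̄} are properly separated if and only if x̄ ∉ qri(Ω). -/

import Mathlib

open Set Pointwise Filter Topology

/-- The cone generated by a set `A`: `{t • a | t ≥ 0, a ∈ A}`. -/
def coneGen {X : Type*} [AddCommGroup X] [Module ℝ X] (A : Set X) : Set X :=
  {y | ∃ t : ℝ, 0 ≤ t ∧ ∃ a ∈ A, y = t • a}

/-- A set is a linear subspace if it is the carrier of a submodule. -/
def IsLinSubspace {X : Type*} [AddCommGroup X] [Module ℝ X] (s : Set X) : Prop :=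
  ∃ L : Submodule ℝ X, (L : Set X) = s

/-- Intrinsic relative interior. -/
def iri {X : Type*} [AddCommGroup X] [Module ℝ X] (Ω : Set X) : Set X :=
  {x ∈ Ω | IsLinSubspace (coneGen ((fun y => y - x) '' Ω))}

/-- Quasi-relative interior. -/
def qri {X : Type*} [AddCommGroup X] [Module ℝ X] [TopologicalSpace X] (Ω : Set X) : Set X :=
  {x ∈ Ω | IsLinSubspace (closure (coneGen ((fun y => y - x) '' Ω)))}

/-- Relative interior in a topological vector space. -/
def ri {X : Type*} [AddCommGroup X] [Module ℝ X] [TopologicalSpace X] (Ω : Set X) : Set X :=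
  {x ∈ Ω | ∃ V ∈ nhds x, V ∩ closure ((affineSpan ℝ Ω : Set X)) ⊆ Ω}

/-- Normal cone (functional-analytic version), a subset of the topological dual. -/
def normalCone {X : Type*} [AddCommGroup X] [Module ℝ X] [TopologicalSpace X]
    (Ω : Set X) (xb : X) : Set (X →L[ℝ] ℝ) :=
  {f | ∀ x ∈ Ω, f (x - xb) ≤ 0}

/-- Two sets are properly separated if some continuous linear functional separates them,
and is not constant simultaneously on both. -/
def ProperlySeparated {X : Type*} [AddCommGroup X] [Module ℝ X] [TopologicalSpace X]
    (Ω₁ Ω₂ : Set X) : Prop :=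
  ∃ f : X →L[ℝ] ℝ, (∀ x ∈ Ω₁, ∀ y ∈ Ω₂, f x ≤ f y) ∧
    (∃ x₀ ∈ Ω₁, ∃ y₀ ∈ Ω₂, f x₀ < f y₀)

section Aux
variable {X : Type*} [AddCommGroup X] [Module ℝ X]

lemma coneGen_smul_mem {A : Set X} {t : ℝ} (ht : 0 ≤ t) {y : X} (hy : y ∈ coneGen A) :
    t • y ∈ coneGen A := by
  obtain ⟨s, hs, a, ha, rfl⟩ := hy
  exact ⟨t * s, mul_nonneg ht hs, a, ha, (mul_smul t s a).symm⟩

lemma coneGen_convex {A : Set X} (hA : Convex ℝ A) : Convex ℝ (coneGen A) := by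
  rintro _ ⟨t1, ht1, a1, ha1, rfl⟩ _ ⟨t2, ht2, a2, ha2, rfl⟩ l m hl hm hlm
  rcases eq_or_lt_of_le (by positivity : (0:ℝ) ≤ l * t1 + m * t2) with hs | hs
  · have h1 : l * t1 = 0 := by nlinarith [mul_nonneg hl ht1, mul_nonneg hm ht2]
    have h2 : m * t2 = 0 := by nlinarith [mul_nonneg hl ht1, mul_nonneg hm ht2]
    refine ⟨0, le_refl 0, a1, ha1, ?_⟩
    simp [smul_smul, h1, h2]
  · set s := l * t1 + m * t2 with hsdef
    have hsne : s ≠ 0 := ne_of_gt hs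
    have e1 : s * (l * t1 / s) = l * t1 := by field_simp
    have e2 : s * (m * t2 / s) = m * t2 := by field_simp
    refine ⟨s, le_of_lt hs, (l * t1 / s) • a1 + (m * t2 / s) • a2,
      hA ha1 ha2 (by positivity) (by positivity) (by field_simp; exact hsdef.symm), ?_⟩
    rw [smul_add, smul_smul, smul_smul, smul_smul, smul_smul, e1, e2]

lemma closure_coneGen_smul_mem [TopologicalSpace X] [ContinuousSMul ℝ X]
    {A : Set X} {t : ℝ} (ht : 0 ≤ t) {y : X} (hy : y ∈ closure (coneGen A)) :
    t • y ∈ closure (coneGen A) := by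
  have h1 : t • y ∈ (fun z => t • z) '' closure (coneGen A) := ⟨y, hy, rfl⟩
  have h2 := image_closure_subset_closure_image (continuous_const_smul t) (s := coneGen A) h1
  refine closure_mono ?_ h2
  rintro _ ⟨c, hc, rfl⟩
  exact coneGen_smul_mem ht hc

end Aux

/-- `Ω` and `{xb}` are properly separated iff `xb ∉ qri Ω`. -/
theorem properlySeparated_singleton_iff_not_qri {X : Type*} [AddCommGroup X] [Module ℝ X]
    [TopologicalSpace X] [IsTopologicalAddGroup X] [ContinuousSMul ℝ X]
    [LocallyConvexSpace ℝ X]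
    (Ω : Set X) (hconv : Convex ℝ Ω) (xb : X) (hxb : xb ∈ Ω) :
    ProperlySeparated Ω {xb} ↔ xb ∉ qri Ω := by
  set C := coneGen ((fun y => y - xb) '' Ω) with hCdef
  have h0C : (0:X) ∈ C := ⟨0, le_refl 0, xb - xb, ⟨xb, hxb, rfl⟩, (zero_smul ℝ _).symm⟩
  have hsubC : ∀ x ∈ Ω, x - xb ∈ C := fun x hx =>
    ⟨1, zero_le_one, x - xb, ⟨x, hx, rfl⟩, (one_smul ℝ _).symm⟩
  have himg : Convex ℝ ((fun y => y - xb) '' Ω) := by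
    have heq : (fun y => y - xb) '' Ω = (fun y => (-xb) + y) '' Ω := by
      ext z; constructor
      · rintro ⟨a, ha, rfl⟩; exact ⟨a, ha, by abel_nf⟩
      · rintro ⟨a, ha, rfl⟩; exact ⟨a, ha, by abel_nf⟩
    rw [heq]
    exact hconv.translate (-xb)
  have hconvC : Convex ℝ (closure C) := (coneGen_convex himg).closure
  constructor
  · rintro ⟨f, hle, x₀, hx₀, y₀, hy₀, hlt⟩ hq
    obtain ⟨-, L, hL⟩ : xb ∈ Ω ∧ IsLinSubspace (closure C) := hq
    rw [Set.mem_singleton_iff] at hy₀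
    have hlt' : f x₀ < f xb := by rw [← hy₀]; exact hlt
    have hfC : ∀ y ∈ closure C, f y ≤ 0 := by
      intro y hy
      have hsub : C ⊆ f ⁻¹' Iic 0 := by
        rintro _ ⟨t, ht, _, ⟨a, ha, rfl⟩, rfl⟩
        have hfa : f a ≤ f xb := hle a ha xb rfl
        simp only [Set.mem_preimage, Set.mem_Iic, map_smul, smul_eq_mul, map_sub]
        nlinarith
      exact closure_minimal hsub (IsClosed.preimage f.continuous isClosed_Iic) hy
    have hv : x₀ - xb ∈ closure C := subset_closure (hsubC x₀ hx₀)
    rw [← hL] at hv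
    have hvm : -(x₀ - xb) ∈ closure C := by
      rw [← hL]; exact L.neg_mem hv
    have hh := hfC _ hvm
    rw [map_neg, map_sub] at hh
    linarith
  · intro hnq
    have hnsub : ¬ IsLinSubspace (closure C) := fun h => hnq ⟨hxb, h⟩
    by_cases hsym : ∀ v ∈ closure C, -v ∈ closure C
    · exfalso
      apply hnsub
      refine ⟨{ carrier := closure C
                zero_mem' := subset_closure h0C
                add_mem' := ?_
                smul_mem' := ?_ }, rfl⟩
      · intro a b ha hb
        have h2 : a + b = (2:ℝ) • ((1/2:ℝ) • a + (1/2:ℝ) • b) := by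
          rw [smul_add, smul_smul, smul_smul]; norm_num
        rw [h2]
        exact closure_coneGen_smul_mem (by norm_num)
          (hconvC ha hb (by norm_num) (by norm_num) (by norm_num))
      · intro c y hy
        rcases le_or_gt 0 c with h | h
        · exact closure_coneGen_smul_mem h hy
        · have he : c • y = (-c) • (-y) := by rw [smul_neg, neg_smul, neg_neg]
          rw [he]
          exact closure_coneGen_smul_mem (by linarith) (hsym y hy)
    · push_neg at hsym
      obtain ⟨v, hv, hvn⟩ := hsym
      obtain ⟨f, u, hfu, huf⟩ := geometric_hahn_banach_closed_point hconvC isClosed_closure hvn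
      have hu0 : 0 < u := by
        have := hfu 0 (subset_closure h0C)
        simpa using this
      have hfle : ∀ y ∈ closure C, f y ≤ 0 := by
        intro y hy
        by_contra hpos
        push_neg at hpos
        have ht : (0:ℝ) ≤ (u + 1) / f y := by positivity
        have hmem := closure_coneGen_smul_mem ht hy
        have hlt2 := hfu _ hmem
        rw [map_smul, smul_eq_mul, div_mul_cancel₀ _ (ne_of_gt hpos)] at hlt2
        linarith
      have hfv : f v < 0 := by
        rw [map_neg] at huf; linarith
      have hex : ∃ w ∈ C, f w < 0 := by
        have hopen : IsOpen (f ⁻¹' Iio 0) := (isOpen_Iio).preimage f.continuous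
        obtain ⟨w, hw1, hw2⟩ := mem_closure_iff.mp hv _ hopen hfv
        exact ⟨w, hw2, hw1⟩
      obtain ⟨w, ⟨t, ht, _, ⟨a, ha, rfl⟩, rfl⟩, hfw⟩ := hex
      have hfw' : t * (f a - f xb) < 0 := by
        simpa [map_smul, map_sub, smul_eq_mul] using hfw
      have hax : f a < f xb := by nlinarith
      refine ⟨f, ?_, a, ha, xb, rfl, hax⟩
      rintro x hx y rfl
      have hh := hfle _ (subset_closure (hsubC x hx))
      rw [map_sub] at hh
      linarith
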